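/- For every t, k > 0 there exists n such that c^n a c^n b c^n ≈^t_k c^n b c^n a c^n, where ≈^t_k is the LTT equivalence; hence the language c*ac*bc* over {a,b,c} is not locally threshold testable. -/

import Mathlib

inductive ABC : Type
  | a | b | c
deriving DecidableEq

open ABC

/-- Number of occurrences of `v` in `w`. -/
def occ (w v : List ABC) : ℕ :=
  (List.range (w.length + 1)).countP (fun i => decide ((w.drop i).take v.length = v))

/-- Equality up to threshold `t`. -/
def thrEq (t i j : ℕ) : Prop := i = j ∨ (t ≤ i ∧ t ≤ j)

/-- The ordinary `(k,t)`-locally threshold testable equivalence. -/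
def LTT (k t : ℕ) (w w' : List ABC) : Prop :=
  (w.length < k ∧ w' = w) ∨
  (k ≤ w.length ∧ k ≤ w'.length ∧
    (∀ v : List ABC, v.length ≤ k → thrEq t (occ w v) (occ w' v)) ∧
    w.take (k - 1) = w'.take (k - 1) ∧
    (w.drop (w.length - (k - 1))) = (w'.drop (w'.length - (k - 1))))
def W (n : ℕ) (x y : ABC) : List ABC :=
  List.replicate n c ++ [x] ++ List.replicate n c ++ [y] ++ List.replicate n c

lemma lenW (n : ℕ) (x y : ABC) : (W n x y).length = 3*n+2 := by
  simp [W]; omega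

lemma getD_rep (r j : ℕ) : (List.replicate r c).getD j c = c := by
  rcases lt_or_ge j r with h | h
  · rw [List.getD_eq_getElem _ _ (by simpa using h)]; simp
  · rw [List.getD_eq_default _ _ (by simpa using h)]

lemma getDW (n : ℕ) (x y : ABC) (i : ℕ) :
    (W n x y).getD i c = if i = n then x else if i = 2*n+1 then y else c := by
  have hW : W n x y
      = List.replicate n c ++ (x :: (List.replicate n c ++ (y :: List.replicate n c))) := by
    simp [W]
  rw [hW]
  rcases lt_or_ge i n with h | h
  · rw [List.getD_append _ _ _ _ (by simpa using h)]
    rw [getD_rep]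
    have h1 : i ≠ n := by omega
    have h2 : i ≠ 2*n+1 := by omega
    simp [h1, h2]
  · rw [List.getD_append_right _ _ _ _ (by simpa using h)]
    simp only [List.length_replicate]
    rcases Nat.eq_or_lt_of_le h with h' | h'
    · subst h'; simp
    · obtain ⟨j, hj⟩ : ∃ j, i - n = j + 1 := ⟨i - n - 1, by omega⟩
      rw [hj, List.getD_cons_succ]
      rcases lt_or_ge j n with h2 | h2
      · rw [List.getD_append _ _ _ _ (by simpa using h2), getD_rep]
        have h3 : i ≠ n := by omega
        have h4 : i ≠ 2*n+1 := by omega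
        simp [h3, h4]
      · rw [List.getD_append_right _ _ _ _ (by simpa using h2)]
        simp only [List.length_replicate]
        rcases Nat.eq_or_lt_of_le h2 with h3 | h3
        · have h4 : i = 2*n+1 := by omega
          have h5 : j - n = 0 := by omega
          have h6 : 2*n+1 ≠ n := by omega
          simp [h4, h5, h6]
        · obtain ⟨m, hm⟩ : ∃ m, j - n = m + 1 := ⟨j - n - 1, by omega⟩
          rw [hm, List.getD_cons_succ, getD_rep]
          have h4 : i ≠ n := by omega
          have h5 : i ≠ 2*n+1 := by omega
          have h6 : 2*n+1 ≠ n := by omega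
          simp [h4, h5, h6]

lemma match_iff (w v : List ABC) (m i : ℕ) (hm : m = v.length) (hi : i ≤ w.length) :
    (w.drop i).take m = v ↔
      (i + v.length ≤ w.length ∧ ∀ j < v.length, w.getD (i+j) c = v.getD j c) := by
  subst hm
  constructor
  · intro h
    have hlen := congrArg List.length h
    simp only [List.length_take, List.length_drop] at hlen
    have h1 : i + v.length ≤ w.length := by omega
    refine ⟨h1, fun j hj => ?_⟩
    have hj2 : i + j < w.length := by omega
    rw [List.getD_eq_getElem _ _ hj2, List.getD_eq_getElem _ _ hj]
    have h3 := List.getElem_of_eq h (i := j)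
      (by simp only [List.length_take, List.length_drop]; omega)
    simpa using h3
  · rintro ⟨h1, h2⟩
    apply List.ext_getElem
    · simp only [List.length_take, List.length_drop]; omega
    · intro j hj1 hj2
      have := h2 j hj2
      rw [List.getD_eq_getElem _ _ (by omega), List.getD_eq_getElem _ _ hj2] at this
      simpa using this

lemma ite_eq_c {x y : ABC} (hx : x ≠ c) (hy : y ≠ c) (P Q : Prop) [Decidable P] [Decidable Q] :
    ((if P then x else if Q then y else c) = c) ↔ (¬P ∧ ¬Q) := by
  split_ifs <;> simp_all

lemma occ_allc (n m : ℕ) (x y x' y' : ABC) (hx : x ≠ c) (hy : y ≠ c)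
    (hx' : x' ≠ c) (hy' : y' ≠ c) :
    occ (W n x y) (List.replicate m c) = occ (W n x' y') (List.replicate m c) := by
  unfold occ
  rw [lenW, lenW]
  apply List.countP_congr
  intro i hi
  simp only [List.mem_range] at hi
  simp only [decide_eq_true_eq]
  rw [match_iff _ _ _ _ (by simp) (by rw [lenW]; omega),
    match_iff _ _ _ _ (by simp) (by rw [lenW]; omega), lenW, lenW, List.length_replicate]
  constructor <;> rintro ⟨h1, h2⟩ <;> refine ⟨h1, fun j hj => ?_⟩
  · have h3 := h2 j hj
    rw [getDW, getD_rep, ite_eq_c hx hy] at h3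
    rw [getDW, getD_rep, ite_eq_c hx' hy']
    exact h3
  · have h3 := h2 j hj
    rw [getDW, getD_rep, ite_eq_c hx' hy'] at h3
    rw [getDW, getD_rep, ite_eq_c hx hy]
    exact h3

lemma countP_unique (N i₀ : ℕ) (p : ℕ → Bool) (h0 : i₀ < N)
    (h : ∀ i < N, p i = true ↔ i = i₀) :
    (List.range N).countP p = 1 := by
  have he : (List.range N).countP p = (List.range N).count i₀ := by
    rw [List.count]
    apply List.countP_congr
    intro i hi
    simp only [List.mem_range] at hi
    simp [h i hi]
  rw [he, List.count_eq_one_of_mem List.nodup_range (by simpa using h0)]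

lemma occ_single (n : ℕ) (x y : ABC) (v : List ABC) (hxy : x ≠ y) (hx : x ≠ c) (hy : y ≠ c)
    (hm : v.length ≤ n) (p : ℕ) (hp : p < v.length) (hvp : v.getD p c ≠ c)
    (hrest : ∀ j < v.length, j ≠ p → v.getD j c = c) :
    occ (W n x y) v = 1 := by
  have hvxy : v.getD p c = x ∨ v.getD p c = y := by
    rcases hv : v.getD p c <;> rcases x <;> rcases y <;> simp_all
  unfold occ
  rw [lenW]
  rcases hvxy with hcase | hcase
  · apply countP_unique _ (n - p) _ (by omega)
    intro i hi
    rw [decide_eq_true_eq, match_iff _ _ _ _ rfl (by rw [lenW]; omega), lenW]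
    constructor
    · rintro ⟨h1, h2⟩
      have h3 := h2 p hp
      rw [getDW, hcase] at h3
      split_ifs at h3 with e1 e2
      · omega
      · exact absurd h3 (Ne.symm hxy)
      · exact absurd h3 (Ne.symm hx)
    · rintro rfl
      have hpn : p ≤ n := by omega
      refine ⟨by omega, fun j hj => ?_⟩
      rw [getDW]
      rcases eq_or_ne j p with rfl | hne
      · rw [if_pos (by omega), hcase]
      · rw [if_neg (by omega), if_neg (by omega), hrest j hj hne]
  · apply countP_unique _ (2*n + 1 - p) _ (by omega)
    intro i hi
    rw [decide_eq_true_eq, match_iff _ _ _ _ rfl (by rw [lenW]; omega), lenW]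
    constructor
    · rintro ⟨h1, h2⟩
      have h3 := h2 p hp
      rw [getDW, hcase] at h3
      split_ifs at h3 with e1 e2
      · exact absurd h3 hxy
      · omega
      · exact absurd h3 (Ne.symm hy)
    · rintro rfl
      have hpn : p ≤ n := by omega
      refine ⟨by omega, fun j hj => ?_⟩
      rw [getDW]
      rcases eq_or_ne j p with rfl | hne
      · rw [if_neg (by omega), if_pos (by omega), hcase]
      · rw [if_neg (by omega), if_neg (by omega), hrest j hj hne]

lemma occ_double (n : ℕ) (x y : ABC) (v : List ABC) (hx : x ≠ c) (hy : y ≠ c)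
    (hm : v.length ≤ n) (j1 j2 : ℕ) (h12 : j1 < j2) (hj2 : j2 < v.length)
    (h1 : v.getD j1 c ≠ c) (h2 : v.getD j2 c ≠ c) :
    occ (W n x y) v = 0 := by
  unfold occ
  rw [List.countP_eq_zero]
  intro i hi
  rw [lenW] at hi
  simp only [List.mem_range] at hi
  simp only [decide_eq_true_eq]
  intro hmatch
  rw [match_iff _ _ _ _ rfl (by rw [lenW]; omega), lenW] at hmatch
  obtain ⟨hlen, hall⟩ := hmatch
  have a1 := hall j1 (by omega)
  have a2 := hall j2 hj2
  rw [getDW] at a1 a2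
  have b1 : i + j1 = n ∨ i + j1 = 2*n+1 := by
    by_contra hb
    push_neg at hb
    rw [if_neg hb.1, if_neg hb.2] at a1
    exact h1 a1.symm
  have b2 : i + j2 = n ∨ i + j2 = 2*n+1 := by
    by_contra hb
    push_neg at hb
    rw [if_neg hb.1, if_neg hb.2] at a2
    exact h2 a2.symm
  omega

lemma occ_nil (w : List ABC) : occ w [] = w.length + 1 := by
  simp [occ]

lemma occ_sym (n : ℕ) (v : List ABC) (hm : v.length ≤ n) :
    occ (W n a b) v = occ (W n b a) v := by
  rcases Nat.eq_zero_or_pos v.length with h0 | h0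
  · rw [List.length_eq_zero_iff.mp h0, occ_nil, occ_nil, lenW, lenW]
  by_cases hall : ∀ j < v.length, v.getD j c = c
  · have hv : v = List.replicate v.length c := by
      apply List.ext_getElem (by simp)
      intro j hj1 hj2
      have := hall j hj1
      rw [List.getD_eq_getElem _ _ hj1] at this
      simp [this]
    rw [hv]
    exact occ_allc n v.length a b b a (by decide) (by decide) (by decide) (by decide)
  · push_neg at hall
    obtain ⟨p, hp, hvp⟩ := hall
    by_cases hone : ∀ j < v.length, j ≠ p → v.getD j c = c
    · rw [occ_single n a b v (by decide) (by decide) (by decide) hm p hp hvp hone,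
        occ_single n b a v (by decide) (by decide) (by decide) hm p hp hvp hone]
    · push_neg at hone
      obtain ⟨q, hq, hqp, hvq⟩ := hone
      rcases lt_or_gt_of_ne hqp with h | h
      · rw [occ_double n a b v (by decide) (by decide) hm q p h hp hvq hvp,
          occ_double n b a v (by decide) (by decide) hm q p h hp hvq hvp]
      · rw [occ_double n a b v (by decide) (by decide) hm p q h hq hvp hvq,
          occ_double n b a v (by decide) (by decide) hm p q h hq hvp hvq]

lemma take_W (n : ℕ) (x y : ABC) (m : ℕ) (hm : m ≤ n) :
    (W n x y).take m = List.replicate m c := by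
  have hW : W n x y
      = List.replicate n c ++ ([x] ++ (List.replicate n c ++ ([y] ++ List.replicate n c))) := by
    simp [W]
  rw [hW, List.take_append_of_le_length (by simpa using hm), List.take_replicate,
    min_eq_left hm]

lemma drop_W (n : ℕ) (x y : ABC) (m : ℕ) (hm : m ≤ n) :
    (W n x y).drop (3*n+2 - m) = List.replicate m c := by
  have hW : W n x y
      = (List.replicate n c ++ [x] ++ List.replicate n c ++ [y]) ++ List.replicate n c := by
    simp [W]
  have hl : (List.replicate n c ++ [x] ++ List.replicate n c ++ [y]).length = 2*n+2 := by
    simp; omega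
  have hsplit : 3*n+2 - m = (List.replicate n c ++ [x] ++ List.replicate n c ++ [y]).length
      + (n - m) := by rw [hl]; omega
  rw [hW, hsplit, List.drop_length_add_append, List.drop_replicate]
  congr 1
  omega

lemma main1 (t k : ℕ) (hk : 0 < k) : LTT k t (W k a b) (W k b a) := by
  right
  refine ⟨by rw [lenW]; omega, by rw [lenW]; omega, fun v hv => Or.inl (occ_sym k v hv), ?_, ?_⟩
  · rw [take_W _ _ _ _ (by omega), take_W _ _ _ _ (by omega)]
  · rw [lenW, lenW, drop_W _ _ _ (k-1) (by omega), drop_W _ _ _ (k-1) (by omega)]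

lemma not_in_lang (n : ℕ) :
    ¬ ∃ i j l : ℕ, W n b a
      = List.replicate i c ++ [a] ++ List.replicate j c ++ [b] ++ List.replicate l c := by
  rintro ⟨i, j, l, he⟩
  have h := congrArg (List.filter (fun z => !(z == c))) he
  simp [W, List.filter_append] at h

theorem cacbc_not_ltt :
    (∀ t k : ℕ, 0 < t → 0 < k → ∃ n : ℕ,
      LTT k t
        (List.replicate n c ++ [a] ++ List.replicate n c ++ [b] ++ List.replicate n c)
        (List.replicate n c ++ [b] ++ List.replicate n c ++ [a] ++ List.replicate n c)) ∧
    ¬ ∃ k t : ℕ, 0 < k ∧ 0 < t ∧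
      ∀ w w' : List ABC, LTT k t w w' →
        (w ∈ {w : List ABC | ∃ i j l : ℕ,
            w = List.replicate i c ++ [a] ++ List.replicate j c ++ [b] ++ List.replicate l c} ↔
         w' ∈ {w : List ABC | ∃ i j l : ℕ,
            w = List.replicate i c ++ [a] ++ List.replicate j c ++ [b] ++ List.replicate l c}) := by
  constructor
  · intro t k _ hk
    exact ⟨k, main1 t k hk⟩
  · rintro ⟨k, t, hk, ht, h⟩
    have hn := main1 t k hk
    have hiff := h (W k a b) (W k b a) hn
    have hw : W k a b ∈ {w : List ABC | ∃ i j l : ℕ,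
        w = List.replicate i c ++ [a] ++ List.replicate j c ++ [b] ++ List.replicate l c} :=
      ⟨k, k, k, rfl⟩
    exact not_in_lang k (hiff.mp hw)
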